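/- arXiv:2009.12143 — 2 statements merged into one kernel-verified Lean document; each statement's English description precedes it below -/
import Mathlib

section
/- Let 0 < a < b be real numbers and set z = (a/b)^2. Then for every natural number m, the series ∑_{n=1}^∞ ((m+n)!/(m!·n!))^2 · z^n converges, and there is a constant C (independent of m) and a sub-exponential factor s(m) such that ∑_{n=1}^∞ ((m+n)!/(m!·n!))^2 z^n ≤ s(m) · (b^2/(b^2−a^2))^m · ((b+a)/(b−a))^m, where s(m)^{1/m} → 1 as m → ∞. Equivalently, limsup_{m→∞} (∑_{n=1}^∞ ((m+n)!/(m!n!))^2 z^n)^{1/m} ≤ (b^2/(b^2−a^2)) · ((b+a)/(b−a)). -/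
open Filter

theorem hypergeometric_series_growth_rate (a b : ℝ) (ha : 0 < a) (hab : a < b) :
    (∀ m : ℕ, Summable (fun n : ℕ =>
        (((m + (n + 1)).factorial : ℝ) / ((m.factorial : ℝ) * ((n + 1).factorial : ℝ))) ^ 2
          * ((a / b) ^ 2) ^ (n + 1))) ∧
    limsup
      (fun m : ℕ =>
        (∑' n : ℕ,
            (((m + (n + 1)).factorial : ℝ) / ((m.factorial : ℝ) * ((n + 1).factorial : ℝ))) ^ 2
              * ((a / b) ^ 2) ^ (n + 1)) ^ ((1 : ℝ) / m))
      atTop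
      ≤ (b ^ 2 / (b ^ 2 - a ^ 2)) * ((b + a) / (b - a)) := by
  have hb : 0 < b := ha.trans hab
  set x : ℝ := a / b with hxdef
  have hx0 : 0 < x := div_pos ha hb
  have hx1 : x < 1 := (div_lt_one hb).2 hab
  have hxnorm : ‖x‖ < 1 := by rw [Real.norm_eq_abs, abs_of_pos hx0]; exact hx1
  -- the basic function
  set f : ℕ → ℕ → ℝ := fun m n => (((n + m).choose m : ℝ)) * x ^ n with hfdef
  have hf0 : ∀ m n, 0 ≤ f m n := fun m n => by positivity
  have hfS : ∀ m, HasSum (f m) (1 / (1 - x) ^ (m + 1)) := fun m =>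
    hasSum_choose_mul_geometric_of_norm_lt_one m hxnorm
  -- rewrite the statement's terms
  have hterm : ∀ m n : ℕ,
      (((m + (n + 1)).factorial : ℝ) / ((m.factorial : ℝ) * ((n + 1).factorial : ℝ))) ^ 2
          * ((a / b) ^ 2) ^ (n + 1)
        = (f m (n + 1)) ^ 2 := by
    intro m n
    have key : ((m + (n + 1)).choose m) * m.factorial * (n + 1).factorial
        = (m + (n + 1)).factorial := by
      have := Nat.choose_mul_factorial_mul_factorial (Nat.le_add_right m (n + 1))
      simpa [Nat.add_sub_cancel_left] using this
    have hfac : (((m + (n + 1)).factorial : ℝ) / ((m.factorial : ℝ) * ((n + 1).factorial : ℝ)))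
        = ((n + 1 + m).choose m : ℝ) := by
      rw [div_eq_iff (by positivity : ((m.factorial : ℝ) * ((n + 1).factorial : ℝ)) ≠ 0),
        Nat.add_comm (n + 1) m]
      norm_cast
      rw [← key]; ring
    rw [hfac, hfdef]
    simp only [← hxdef]
    rw [mul_pow, ← pow_mul, ← pow_mul, Nat.mul_comm 2 (n + 1)]
  -- summability
  have hfshift : ∀ m, Summable (fun n : ℕ => f m (n + 1)) := fun m =>
    ((summable_nat_add_iff 1).2 (hfS m).summable)
  have hfle : ∀ m n, f m n ≤ 1 / (1 - x) ^ (m + 1) := fun m n =>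
    le_hasSum (hfS m) n (fun i _ => hf0 m i)
  have hsq_summable : ∀ m, Summable (fun n : ℕ => (f m (n + 1)) ^ 2) := by
    intro m
    apply Summable.of_nonneg_of_le (fun n => by positivity)
      (fun n => ?_) ((hfshift m).mul_left (1 / (1 - x) ^ (m + 1)))
    rw [sq]
    exact mul_le_mul_of_nonneg_right (hfle m (n + 1)) (hf0 m (n + 1))
  have hsumm : ∀ m : ℕ, Summable (fun n : ℕ =>
      (((m + (n + 1)).factorial : ℝ) / ((m.factorial : ℝ) * ((n + 1).factorial : ℝ))) ^ 2
        * ((a / b) ^ 2) ^ (n + 1)) := by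
    intro m
    exact (hsq_summable m).congr (fun n => (hterm m n).symm)
  refine ⟨hsumm, ?_⟩
  -- the bound on the tsum
  set c : ℝ := (1 / (1 - x)) ^ 2 with hcdef
  have h1x : 0 < 1 - x := by linarith
  have hc1 : 1 < 1 / (1 - x) := (one_lt_one_div h1x (by linarith))
  have hc0 : 0 < c := by positivity
  have htsum_le : ∀ m : ℕ, (∑' n : ℕ,
      (((m + (n + 1)).factorial : ℝ) / ((m.factorial : ℝ) * ((n + 1).factorial : ℝ))) ^ 2
        * ((a / b) ^ 2) ^ (n + 1)) ≤ c ^ (m + 1) := by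
    intro m
    have h1 : (∑' n : ℕ, (((m + (n + 1)).factorial : ℝ) /
        ((m.factorial : ℝ) * ((n + 1).factorial : ℝ))) ^ 2 * ((a / b) ^ 2) ^ (n + 1))
        = ∑' n : ℕ, (f m (n + 1)) ^ 2 := tsum_congr (fun n => hterm m n)
    have hshift_le : (∑' n : ℕ, f m (n + 1)) ≤ 1 / (1 - x) ^ (m + 1) := by
      rw [← (hfS m).tsum_eq]
      exact Summable.tsum_le_tsum_of_inj (fun n => n + 1) (add_left_injective 1)
        (fun i _ => hf0 m i) (fun n => le_rfl) (hfshift m) (hfS m).summable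
    have h2 : (∑' n : ℕ, (f m (n + 1)) ^ 2)
        ≤ (1 / (1 - x) ^ (m + 1)) * ∑' n : ℕ, f m (n + 1) := by
      rw [← tsum_mul_left]
      refine Summable.tsum_le_tsum (fun n => ?_) (hsq_summable m) ((hfshift m).mul_left _)
      rw [sq]
      exact mul_le_mul_of_nonneg_right (hfle m (n + 1)) (hf0 m (n + 1))
    have h3 : (1 / (1 - x) ^ (m + 1)) * (∑' n : ℕ, f m (n + 1))
        ≤ (1 / (1 - x) ^ (m + 1)) * (1 / (1 - x) ^ (m + 1)) := by
      apply mul_le_mul_of_nonneg_left hshift_le (by positivity)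
    have h4 : (1 / (1 - x) ^ (m + 1)) * (1 / (1 - x) ^ (m + 1)) = c ^ (m + 1) := by
      rw [hcdef, ← pow_mul, Nat.mul_comm 2 (m + 1), pow_mul, div_pow, one_pow]
      ring
    rw [h1]
    exact h2.trans (h3.trans_eq h4)
  -- tsum nonneg
  have htsum_nonneg : ∀ m : ℕ, 0 ≤ (∑' n : ℕ,
      (((m + (n + 1)).factorial : ℝ) / ((m.factorial : ℝ) * ((n + 1).factorial : ℝ))) ^ 2
        * ((a / b) ^ 2) ^ (n + 1)) := fun m =>
    tsum_nonneg (fun n => by positivity)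
  -- the comparison sequence
  set v : ℕ → ℝ := fun m => c ^ ((((m : ℝ) + 1)) / m) with hvdef
  have hev : ∀ᶠ m in atTop, (fun m : ℕ =>
      (∑' n : ℕ,
          (((m + (n + 1)).factorial : ℝ) / ((m.factorial : ℝ) * ((n + 1).factorial : ℝ))) ^ 2
            * ((a / b) ^ 2) ^ (n + 1)) ^ ((1 : ℝ) / m)) m ≤ v m := by
    filter_upwards [eventually_ge_atTop 1] with m hm
    have hm0 : (0 : ℝ) < m := by exact_mod_cast hm
    have h1 := Real.rpow_le_rpow (htsum_nonneg m) (htsum_le m) (by positivity : (0:ℝ) ≤ 1 / m)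
    refine h1.trans_eq ?_
    rw [← Real.rpow_natCast c (m + 1), ← Real.rpow_mul hc0.le]
    congr 1
    push_cast
    field_simp
  -- v tends to c
  have hvtend : Tendsto v atTop (nhds c) := by
    have hexp : Tendsto (fun m : ℕ => ((m : ℝ) + 1) / m) atTop (nhds 1) := by
      have : Tendsto (fun m : ℕ => 1 + 1 / (m : ℝ)) atTop (nhds (1 + 0)) :=
        tendsto_const_nhds.add tendsto_one_div_atTop_nhds_zero_nat
      rw [add_zero] at this
      refine this.congr' ?_
      filter_upwards [eventually_ge_atTop 1] with m hm
      have hm0 : (m : ℝ) ≠ 0 := by positivity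
      field_simp
    have hcont : ContinuousAt (fun y : ℝ => c ^ y) 1 :=
      Real.continuousAt_const_rpow hc0.ne'
    have := hcont.tendsto.comp hexp
    simpa [Real.rpow_one, hvdef, Function.comp_def] using this
  -- final limsup bound
  have hlimsup : limsup
      (fun m : ℕ =>
        (∑' n : ℕ,
            (((m + (n + 1)).factorial : ℝ) / ((m.factorial : ℝ) * ((n + 1).factorial : ℝ))) ^ 2
              * ((a / b) ^ 2) ^ (n + 1)) ^ ((1 : ℝ) / m))
      atTop ≤ c := by
    have hub := limsup_le_limsup hev
      (isCoboundedUnder_le_of_le atTop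
        (fun m => Real.rpow_nonneg (htsum_nonneg m) _))
      (hvtend.isBoundedUnder_le)
    rwa [hvtend.limsup_eq] at hub
  refine hlimsup.trans_eq ?_
  rw [hcdef, hxdef]
  have h1 : b - a ≠ 0 := by linarith
  have h2 : b + a ≠ 0 := by linarith
  have h3 : b ^ 2 - a ^ 2 ≠ 0 := by nlinarith
  field_simp
  ring
end

section
/- Let 0 < a_p, 0 < a_q < d and suppose a_p < d − a_q. Define σ(m,n) = ((m+n)/m)^{2m} · ((m+n)/n)^{2n} · (a_p/d)^{2m} · (a_q/d)^{2n} for positive integers m, n. Then limsup_{m→∞} (∑_{n=1}^∞ σ(m,n))^{1/m} ≤ (a_p/(d − a_q))^2. -/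
open Filter Topology

/-- The term `σ(m,n)` arising from large-order asymptotics of Hankel and Bessel functions. -/
noncomputable def sigmaTerm (a_p a_q d : ℝ) (m n : ℕ) : ℝ :=
  (((m : ℝ) + n) / m) ^ (2 * m) * (((m : ℝ) + n) / n) ^ (2 * n)
    * (a_p / d) ^ (2 * m) * (a_q / d) ^ (2 * n)

private lemma sigma_nonneg (a_p a_q d : ℝ) (m n : ℕ) : 0 ≤ sigmaTerm a_p a_q d m n := by
  unfold sigmaTerm
  have h1 : Even (2 * m) := even_two_mul m
  have h2 : Even (2 * n) := even_two_mul n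
  exact mul_nonneg (mul_nonneg (mul_nonneg (h1.pow_nonneg _) (h2.pow_nonneg _))
    (h1.pow_nonneg _)) (h2.pow_nonneg _)

private lemma key_amgm {t : ℝ} (ht0 : 0 < t) (ht1 : t < 1) {m n : ℕ} (hm : 1 ≤ m) (hn : 1 ≤ n) :
    (((m : ℝ) + n) * t / m) ^ m * (((m : ℝ) + n) * (1 - t) / n) ^ n ≤ 1 := by
  have hm0 : (0:ℝ) < m := by exact_mod_cast hm
  have hn0 : (0:ℝ) < n := by exact_mod_cast hn
  set s : ℝ := (m : ℝ) + n with hs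
  have hs0 : 0 < s := by positivity
  have ht1' : 0 < 1 - t := by linarith
  have hp₁ : (0:ℝ) ≤ s * t / m := by positivity
  have hp₂ : (0:ℝ) ≤ s * (1 - t) / n := by positivity
  have hw : (m:ℝ)/s + (n:ℝ)/s = 1 := by field_simp; exact hs.symm
  have h := Real.geom_mean_le_arith_mean2_weighted (by positivity : (0:ℝ) ≤ (m:ℝ)/s)
    (by positivity : (0:ℝ) ≤ (n:ℝ)/s) hp₁ hp₂ hw
  have harith : (m:ℝ)/s * (s*t/m) + (n:ℝ)/s * (s*(1-t)/n) = 1 := by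
    field_simp
    ring
  rw [harith] at h
  have h2 : ((s*t/m) ^ ((m:ℝ)/s) * (s*(1-t)/n) ^ ((n:ℝ)/s)) ^ s ≤ 1 :=
    Real.rpow_le_one (by positivity) h hs0.le
  rw [Real.mul_rpow (Real.rpow_nonneg hp₁ _) (Real.rpow_nonneg hp₂ _),
    ← Real.rpow_mul hp₁, ← Real.rpow_mul hp₂, div_mul_cancel₀ _ hs0.ne',
    div_mul_cancel₀ _ hs0.ne', Real.rpow_natCast, Real.rpow_natCast] at h2
  exact h2

private lemma sigma_le {a_p a_q d t : ℝ} (hap : 0 < a_p) (haq : 0 < a_q) (hd : 0 < d)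
    (ht0 : 0 < t) (ht1 : t < 1) {m n : ℕ} (hm : 1 ≤ m) (hn : 1 ≤ n) :
    sigmaTerm a_p a_q d m n ≤ (a_p / d / t) ^ (2*m) * (a_q / d / (1 - t)) ^ (2*n) := by
  have hm0 : (0:ℝ) < m := by exact_mod_cast hm
  have hn0 : (0:ℝ) < n := by exact_mod_cast hn
  have ht1' : 0 < 1 - t := by linarith
  have hkey := key_amgm ht0 ht1 hm hn
  set B := (((m : ℝ) + n) * t / m) ^ m * (((m : ℝ) + n) * (1 - t) / n) ^ n with hB
  have hB0 : 0 ≤ B := by positivity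
  have hBsq : B ^ 2 ≤ 1 := by nlinarith
  have hmne : (m:ℝ) ≠ 0 := hm0.ne'
  have hnne : (n:ℝ) ≠ 0 := hn0.ne'
  have htne : t ≠ 0 := ht0.ne'
  have ht1ne : (1 - t) ≠ 0 := ht1'.ne'
  have hdne : d ≠ 0 := hd.ne'
  have e1 : ((m:ℝ)+n)/m * (a_p/d) = (((m:ℝ)+n)*t/m) * (a_p/d/t) := by
    field_simp
  have e2 : ((m:ℝ)+n)/n * (a_q/d) = (((m:ℝ)+n)*(1-t)/n) * (a_q/d/(1-t)) := by
    field_simp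
  have heq : sigmaTerm a_p a_q d m n
      = B ^ 2 * ((a_p / d / t) ^ (2*m) * (a_q / d / (1 - t)) ^ (2*n)) := by
    unfold sigmaTerm
    rw [show (((m:ℝ)+n)/m)^(2*m) * (((m:ℝ)+n)/n)^(2*n) * (a_p/d)^(2*m) * (a_q/d)^(2*n)
        = (((m:ℝ)+n)/m * (a_p/d))^(2*m) * (((m:ℝ)+n)/n * (a_q/d))^(2*n) by
      rw [mul_pow, mul_pow]; ring,
      e1, e2, hB, mul_pow, mul_pow]
    ring
  rw [heq]
  exact mul_le_of_le_one_left (by positivity) hBsq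

private lemma sum_bound {a_p a_q d t : ℝ} (hap : 0 < a_p) (haq : 0 < a_q) (hd : 0 < d)
    (ht0 : 0 < t) (ht1 : t < 1) (hr : a_q / d < 1 - t) {m : ℕ} (hm : 1 ≤ m) :
    Summable (fun n : ℕ => sigmaTerm a_p a_q d m (n + 1)) ∧
    ∑' n : ℕ, sigmaTerm a_p a_q d m (n + 1)
      ≤ (a_p / d / t) ^ (2*m)
        * ((a_q/d/(1-t))^2 / (1 - (a_q/d/(1-t))^2)) := by
  have ht1' : 0 < 1 - t := by linarith
  set r := a_q / d / (1 - t) with hrr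
  have hr0 : 0 < r := by positivity
  have hr1 : r < 1 := (div_lt_one ht1').mpr hr
  have hr2 : r ^ 2 < 1 := by nlinarith
  have hr20 : (0:ℝ) ≤ r ^ 2 := by positivity
  set C := (a_p / d / t) ^ (2*m) with hCC
  have hC0 : 0 ≤ C := by positivity
  have hg : Summable (fun n : ℕ => C * r ^ 2 * (r ^ 2) ^ n) :=
    (summable_geometric_of_lt_one hr20 hr2).mul_left _
  have hle : ∀ n : ℕ, sigmaTerm a_p a_q d m (n+1) ≤ C * r ^ 2 * (r ^ 2) ^ n := by
    intro n
    have h := sigma_le hap haq hd ht0 ht1 hm (Nat.le_add_left 1 n)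
    calc sigmaTerm a_p a_q d m (n+1) ≤ C * r ^ (2*(n+1)) := h
      _ = C * r ^ 2 * (r ^ 2) ^ n := by ring
  have hσ0 : ∀ n : ℕ, 0 ≤ sigmaTerm a_p a_q d m (n+1) := fun n => sigma_nonneg _ _ _ _ _
  have hsum : Summable (fun n : ℕ => sigmaTerm a_p a_q d m (n + 1)) :=
    Summable.of_nonneg_of_le hσ0 hle hg
  refine ⟨hsum, ?_⟩
  calc ∑' n : ℕ, sigmaTerm a_p a_q d m (n+1)
      ≤ ∑' n : ℕ, C * r ^ 2 * (r ^ 2) ^ n := Summable.tsum_le_tsum hle hsum hg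
    _ = C * r ^ 2 * (1 - r ^ 2)⁻¹ := by
        rw [tsum_mul_left, tsum_geometric_of_lt_one hr20 hr2]
    _ = C * (r ^ 2 / (1 - r ^ 2)) := by ring

private lemma limsup_le_t {a_p a_q d t : ℝ} (hap : 0 < a_p) (haq : 0 < a_q) (hd : 0 < d)
    (ht0 : 0 < t) (ht1 : t < 1) (hr : a_q / d < 1 - t) :
    limsup (fun m : ℕ => (∑' n : ℕ, sigmaTerm a_p a_q d m (n + 1)) ^ ((1 : ℝ) / m)) atTop
      ≤ (a_p / d / t) ^ 2 := by
  have ht1' : 0 < 1 - t := by linarith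
  set r := a_q / d / (1 - t) with hrr
  have hr0 : 0 < r := by positivity
  have hr1 : r < 1 := (div_lt_one ht1').mpr hr
  have hr2 : r ^ 2 < 1 := by nlinarith
  set K := r ^ 2 / (1 - r ^ 2) with hK
  have hK0 : 0 < K := div_pos (by positivity) (by linarith)
  set c := (a_p / d / t) ^ 2 with hc
  have hc0 : 0 < c := by positivity
  have h1 : Tendsto (fun m : ℕ => (1:ℝ)/m) atTop (𝓝 0) := tendsto_one_div_atTop_nhds_zero_nat
  have h2 : Tendsto (fun m : ℕ => K ^ ((1:ℝ)/m)) atTop (𝓝 1) := by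
    have := (Real.continuousAt_const_rpow (b := (0:ℝ)) hK0.ne').tendsto.comp h1
    simpa [Function.comp_def] using this
  have hg : Tendsto (fun m : ℕ => c * K ^ ((1:ℝ)/m)) atTop (𝓝 c) := by
    simpa using h2.const_mul c
  have hev : ∀ᶠ m : ℕ in atTop,
      (∑' n : ℕ, sigmaTerm a_p a_q d m (n + 1)) ^ ((1 : ℝ) / m) ≤ c * K ^ ((1:ℝ)/m) := by
    filter_upwards [eventually_ge_atTop 1] with m hm
    have hm0 : (0:ℝ) < m := by exact_mod_cast hm
    obtain ⟨hsum, htsum⟩ := sum_bound hap haq hd ht0 ht1 hr hm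
    have h0 : 0 ≤ ∑' n : ℕ, sigmaTerm a_p a_q d m (n+1) :=
      tsum_nonneg fun n => sigma_nonneg _ _ _ _ _
    have hb : ((a_p / d / t) ^ (2*m) * K) ^ ((1:ℝ)/m) = c * K ^ ((1:ℝ)/m) := by
      rw [Real.mul_rpow (by positivity) hK0.le]
      congr 1
      rw [pow_mul, ← Real.rpow_natCast ((a_p/d/t)^2) m, ← Real.rpow_mul (by positivity),
        mul_one_div_cancel hm0.ne', Real.rpow_one]
    calc (∑' n : ℕ, sigmaTerm a_p a_q d m (n + 1)) ^ ((1 : ℝ) / m)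
        ≤ ((a_p / d / t) ^ (2*m) * K) ^ ((1:ℝ)/m) :=
          Real.rpow_le_rpow h0 htsum (by positivity)
      _ = c * K ^ ((1:ℝ)/m) := hb
  have hcb : IsCoboundedUnder (· ≤ ·) atTop
      (fun m : ℕ => (∑' n : ℕ, sigmaTerm a_p a_q d m (n + 1)) ^ ((1 : ℝ) / m)) :=
    isCoboundedUnder_le_of_le atTop fun m =>
      Real.rpow_nonneg (tsum_nonneg fun n => sigma_nonneg _ _ _ _ _) _
  calc limsup (fun m : ℕ => (∑' n : ℕ, sigmaTerm a_p a_q d m (n + 1)) ^ ((1 : ℝ) / m)) atTop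
      ≤ limsup (fun m : ℕ => c * K ^ ((1:ℝ)/m)) atTop :=
        limsup_le_limsup hev hcb hg.isBoundedUnder_le
    _ = c := hg.limsup_eq

theorem sigma_sum_growth_rate (a_p a_q d : ℝ) (hap : 0 < a_p) (haq : 0 < a_q)
    (haqd : a_q < d) (hsep : a_p < d - a_q) :
    (∀ m : ℕ, 1 ≤ m → Summable (fun n : ℕ => sigmaTerm a_p a_q d m (n + 1))) ∧
    limsup
      (fun m : ℕ => (∑' n : ℕ, sigmaTerm a_p a_q d m (n + 1)) ^ ((1 : ℝ) / m)) atTop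
      ≤ (a_p / (d - a_q)) ^ 2 := by
  have hd : 0 < d := haq.trans haqd
  have hx0 : 0 < a_p / d := by positivity
  have hy0 : 0 < a_q / d := by positivity
  have hxy : a_p / d + a_q / d < 1 := by
    rw [← add_div, div_lt_one hd]; linarith
  constructor
  · intro m hm
    set t := (a_p/d) / (a_p/d + a_q/d) with hT
    have hden : 0 < a_p/d + a_q/d := by positivity
    have ht0 : 0 < t := by positivity
    have ht1 : t < 1 := by rw [hT, div_lt_one hden]; linarith
    have hr : a_q/d < 1 - t := by
      have h1 : 1 - t = (a_q/d)/(a_p/d + a_q/d) := by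
        rw [hT]; field_simp; ring
      rw [h1, lt_div_iff₀ hden]
      nlinarith
    exact (sum_bound hap haq hd ht0 ht1 hr hm).1
  · refine le_of_forall_pos_le_add ?_
    intro ε hε
    have hdq : 0 < d - a_q := by linarith
    set c := (a_p/(d - a_q))^2 with hc
    have hc0 : 0 < c := by positivity
    have hcε : 0 < c + ε := by linarith
    set θ := Real.sqrt (c/(c+ε)) with hθ
    have hθ0 : 0 < θ := Real.sqrt_pos.mpr (by positivity)
    have hθ1 : θ < 1 := by
      rw [hθ, show (1:ℝ) = Real.sqrt 1 by simp]
      exact Real.sqrt_lt_sqrt (by positivity) (by rw [div_lt_one hcε]; linarith)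
    have hθsq : θ ^ 2 = c/(c+ε) := Real.sq_sqrt (by positivity)
    set t := ((d - a_q)/d) * θ with ht
    have hdq1 : (d - a_q)/d < 1 := by rw [div_lt_one hd]; linarith
    have hdq0 : 0 < (d - a_q)/d := by positivity
    have ht0 : 0 < t := by positivity
    have h1 : t < (d - a_q)/d := by
      rw [ht]
      nlinarith
    have ht1 : t < 1 := h1.trans hdq1
    have hr : a_q/d < 1 - t := by
      have h2 : (d - a_q)/d = 1 - a_q/d := by field_simp
      rw [h2] at h1
      linarith
    have hlim := limsup_le_t hap haq hd ht0 ht1 hr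
    refine hlim.trans (le_of_eq ?_)
    have ht2 : t ^ 2 = ((d - a_q)/d)^2 * (c/(c+ε)) := by
      rw [ht, mul_pow, hθsq]
    have hcne : c ≠ 0 := hc0.ne'
    have hcεne : c + ε ≠ 0 := hcε.ne'
    have hdne : d ≠ 0 := hd.ne'
    have hdqne : d - a_q ≠ 0 := hdq.ne'
    rw [div_pow, div_pow, ht2, hc]
    field_simp
end
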